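/- For the basis vectors x_λ ∈ Λ^m(V*) ⊗ Λ^n(V), the Chevalley generator E_{a,a+1} of gl_{∞/2} acts by E_{a,a+1}(x_λ) = Σ_μ x_μ, where μ ranges over diagrams obtained from the weight diagram of λ by the local moves at positions (a, a+1) listed in the paper's figure 1 (e.g. (∘,<) ↦ (<,∘); (∘,×) ↦ (<,>); (>,∘) ↦ (∘,>); (>,<) ↦ (∘,×) + (×,∘); (>,×) ↦ (×,>); (×,∘) ↦ (<,>); (×,<) ↦ (<,×); all other configurations give 0). -/
import Mathlib


open Classical

/-- Symbols of a weight diagram. -/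
inductive WSym where
  | empty | lt | gt | cross
deriving DecidableEq

/-- Index set for the standard monomial basis of `Λ^m(V*) ⊗ Λ^n(V)`:
`(c, d)` encodes `x_λ = w_{c₁+1/2}∧…∧w_{c_m+1/2} ⊗ v_{d₁+1/2}∧…∧v_{d_n+1/2}`
with strictly decreasing indices (`t : ℕ` encodes the half-integer `t + 1/2`). -/
abbrev XIdx (m n : ℕ) := {c : Fin m → ℕ // StrictAnti c} × {d : Fin n → ℕ // StrictAnti d}

/-- The `gl_{∞/2}`-module `Λ^m(V*) ⊗ Λ^n(V)` in its standard monomial basis. -/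
abbrev Xsp (m n : ℕ) := XIdx m n →₀ ℚ

/-- The operator replacing one factor `v_{u+1/2}` by `v_{v+1/2}` in the `Λ^n(V)`
part (for adjacent `u`, `v` this is the action of the corresponding matrix unit,
extended by the Leibniz rule; a wedge with a repeated factor is `0`). -/
noncomputable def replD {m n : ℕ} (u v : ℕ) : Xsp m n →ₗ[ℚ] Xsp m n :=
  Finsupp.lift (Xsp m n) ℚ (XIdx m n) fun p =>
    ∑ j : Fin n, if p.2.1 j = u then
      (if h : StrictAnti (Function.update p.2.1 j v)
        then Finsupp.single (p.1, ⟨Function.update p.2.1 j v, h⟩) (1 : ℚ) else 0)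
      else 0

/-- The operator replacing one factor `w_{u+1/2}` by `w_{v+1/2}` in the `Λ^m(V*)`
part. -/
noncomputable def replC {m n : ℕ} (u v : ℕ) : Xsp m n →ₗ[ℚ] Xsp m n :=
  Finsupp.lift (Xsp m n) ℚ (XIdx m n) fun p =>
    ∑ i : Fin m, if p.1.1 i = u then
      (if h : StrictAnti (Function.update p.1.1 i v)
        then Finsupp.single (⟨Function.update p.1.1 i v, h⟩, p.2) (1 : ℚ) else 0)
      else 0

/-- The Chevalley raising operator `E_{a,a+1}` (with `a = t + 1/2`) acting on
`Λ^m(V*) ⊗ Λ^n(V)`: `E_{a,a+1} v_{a+1} = v_a` and `E_{a,a+1} w_a = (−1)^{2a+1} w_{a+1}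
= w_{a+1}`, extended by the Leibniz rule. -/
noncomputable def Eraise {m n : ℕ} (t : ℕ) : Xsp m n →ₗ[ℚ] Xsp m n :=
  replD (t + 1) t + replC t (t + 1)

/-- The weight diagram of the basis vector `x_λ` indexed by `p = (c, d)`:
`>` where only a `w`-index sits, `<` where only a `v`-index sits, `×` where both do. -/
noncomputable def diagOf {m n : ℕ} (p : XIdx m n) : ℕ → WSym := fun s =>
  if ∃ i, p.1.1 i = s then (if ∃ j, p.2.1 j = s then WSym.cross else WSym.gt)
  else (if ∃ j, p.2.1 j = s then WSym.lt else WSym.empty)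

/-- The table of local moves at positions `(a, a+1)` from figure 1 of the paper. -/
def movePatterns : List ((WSym × WSym) × (WSym × WSym)) :=
  [((.empty, .lt), (.lt, .empty)),
   ((.empty, .cross), (.lt, .gt)),
   ((.gt, .empty), (.empty, .gt)),
   ((.gt, .lt), (.empty, .cross)),
   ((.gt, .lt), (.cross, .empty)),
   ((.gt, .cross), (.cross, .gt)),
   ((.cross, .empty), (.lt, .gt)),
   ((.cross, .lt), (.lt, .cross))]

/-- `g` is obtained from `f` by one of the listed local moves at positions `t`, `t+1`. -/
def TableMove (t : ℕ) (f g : ℕ → WSym) : Prop :=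
  (∀ s, s ≠ t → s ≠ t + 1 → g s = f s) ∧
  ((f t, f (t + 1)), (g t, g (t + 1))) ∈ movePatterns

set_option linter.constructorNameAsVariable false
set_option linter.unusedTactic false

namespace Stmt7Aux

def wsA (x : WSym) : Prop := x = WSym.gt ∨ x = WSym.cross
def wsB (x : WSym) : Prop := x = WSym.lt ∨ x = WSym.cross

variable {m n : ℕ}

lemma wsA_diag (p : XIdx m n) (s : ℕ) : wsA (diagOf p s) ↔ ∃ i, p.1.1 i = s := by
  by_cases h1 : ∃ i, p.1.1 i = s <;> by_cases h2 : ∃ j, p.2.1 j = s <;>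
    simp [diagOf, wsA, h1, h2]

lemma wsB_diag (p : XIdx m n) (s : ℕ) : wsB (diagOf p s) ↔ ∃ j, p.2.1 j = s := by
  by_cases h1 : ∃ i, p.1.1 i = s <;> by_cases h2 : ∃ j, p.2.1 j = s <;>
    simp [diagOf, wsB, h1, h2]

lemma diag_ext {x y : WSym} (hA : wsA x ↔ wsA y) (hB : wsB x ↔ wsB y) : x = y := by
  cases x <;> cases y <;> simp_all [wsA, wsB]

lemma strictAnti_update {k : ℕ} {f : Fin k → ℕ} (hf : StrictAnti f) {j : Fin k} {v : ℕ}
    (h1 : ∀ i, i < j → v < f i) (h2 : ∀ i, j < i → f i < v) :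
    StrictAnti (Function.update f j v) := by
  intro a b hab
  rcases eq_or_ne a j with rfl | ha
  · rw [Function.update_self, Function.update_of_ne hab.ne']
    exact h2 b hab
  · rw [Function.update_of_ne ha]
    rcases eq_or_ne b j with rfl | hb
    · rw [Function.update_self]; exact h1 a hab
    · rw [Function.update_of_ne hb]; exact hf hab

lemma strictAnti_updateD {k t : ℕ} {f : Fin k → ℕ} (hf : StrictAnti f) {j : Fin k}
    (hj : f j = t + 1) (h : ∀ j', f j' ≠ t) : StrictAnti (Function.update f j t) := by
  apply strictAnti_update hf
  · intro i hi; have := hf hi; omega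
  · intro i hi; have := hf hi; have := h i; omega

lemma not_strictAnti_updateD {k t : ℕ} {f : Fin k → ℕ} {j j' : Fin k}
    (hj : f j = t + 1) (hj' : f j' = t) : ¬ StrictAnti (Function.update f j t) := by
  intro h
  have hne : j' ≠ j := by intro e; rw [e, hj] at hj'; omega
  have he : Function.update f j t j = Function.update f j t j' := by
    rw [Function.update_self, Function.update_of_ne hne, hj']
  exact hne ((h.injective he).symm)

lemma strictAnti_updateC {k t : ℕ} {f : Fin k → ℕ} (hf : StrictAnti f) {i : Fin k}
    (hi : f i = t) (h : ∀ i', f i' ≠ t + 1) : StrictAnti (Function.update f i (t + 1)) := by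
  apply strictAnti_update hf
  · intro a ha; have := hf ha; have := h a; omega
  · intro a ha; have := hf ha; omega

lemma not_strictAnti_updateC {k t : ℕ} {f : Fin k → ℕ} {i i' : Fin k}
    (hi : f i = t) (hi' : f i' = t + 1) : ¬ StrictAnti (Function.update f i (t + 1)) := by
  intro h
  have hne : i' ≠ i := by intro e; rw [e, hi] at hi'; omega
  have he : Function.update f i (t+1) i = Function.update f i (t+1) i' := by
    rw [Function.update_self, Function.update_of_ne hne, hi']
  exact hne ((h.injective he).symm)

lemma exists_update_iff {k : ℕ} {f : Fin k → ℕ} (hf : Function.Injective f) (j : Fin k) (v s : ℕ) :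
    (∃ i, Function.update f j v i = s) ↔ s = v ∨ ((∃ i, f i = s) ∧ s ≠ f j) := by
  constructor
  · rintro ⟨i, rfl⟩
    rcases eq_or_ne i j with rfl | hij
    · left; rw [Function.update_self]
    · right; rw [Function.update_of_ne hij]
      exact ⟨⟨i, rfl⟩, fun e => hij (hf e)⟩
  · rintro (rfl | ⟨⟨i, rfl⟩, hs⟩)
    · exact ⟨j, Function.update_self ..⟩
    · have hij : i ≠ j := fun e => hs (by rw [e])
      exact ⟨i, Function.update_of_ne hij _ _⟩

def PD (t : ℕ) (p : XIdx m n) : Prop := (∃ j, p.2.1 j = t + 1) ∧ ∀ j, p.2.1 j ≠ t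
def PC (t : ℕ) (p : XIdx m n) : Prop := (∃ i, p.1.1 i = t) ∧ ∀ i, p.1.1 i ≠ t + 1

noncomputable def qD (t : ℕ) (p : XIdx m n) (h : PD t p) : XIdx m n :=
  (p.1, ⟨Function.update p.2.1 (Classical.choose h.1) t,
    strictAnti_updateD p.2.2 (Classical.choose_spec h.1) h.2⟩)

noncomputable def qC (t : ℕ) (p : XIdx m n) (h : PC t p) : XIdx m n :=
  (⟨Function.update p.1.1 (Classical.choose h.1) (t + 1),
    strictAnti_updateC p.1.2 (Classical.choose_spec h.1) h.2⟩, p.2)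

lemma range_qD_fst (t : ℕ) (p : XIdx m n) (h : PD t p) (s : ℕ) :
    (∃ i, (qD t p h).1.1 i = s) ↔ ∃ i, p.1.1 i = s := Iff.rfl

lemma range_qD_snd (t : ℕ) (p : XIdx m n) (h : PD t p) (s : ℕ) :
    (∃ j, (qD t p h).2.1 j = s) ↔ s = t ∨ ((∃ j, p.2.1 j = s) ∧ s ≠ t + 1) := by
  have := exists_update_iff p.2.2.injective (Classical.choose h.1) t s
  rw [Classical.choose_spec h.1] at this
  exact this

lemma range_qC_fst (t : ℕ) (p : XIdx m n) (h : PC t p) (s : ℕ) :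
    (∃ i, (qC t p h).1.1 i = s) ↔ s = t + 1 ∨ ((∃ i, p.1.1 i = s) ∧ s ≠ t) := by
  have := exists_update_iff p.1.2.injective (Classical.choose h.1) (t + 1) s
  rw [Classical.choose_spec h.1] at this
  exact this

lemma range_qC_snd (t : ℕ) (p : XIdx m n) (h : PC t p) (s : ℕ) :
    (∃ j, (qC t p h).2.1 j = s) ↔ ∃ j, p.2.1 j = s := Iff.rfl

lemma pattern_shape {ft ft1 gt gt1 : WSym}
    (h : ((ft, ft1), (gt, gt1)) ∈ movePatterns) :
    (((wsA gt ↔ wsA ft) ∧ (wsA gt1 ↔ wsA ft1)) ∧ ¬ wsB ft ∧ wsB ft1 ∧ wsB gt ∧ ¬ wsB gt1)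
    ∨ (((wsB gt ↔ wsB ft) ∧ (wsB gt1 ↔ wsB ft1)) ∧ wsA ft ∧ ¬ wsA ft1 ∧ ¬ wsA gt ∧ wsA gt1) := by
  simp only [movePatterns, List.mem_cons, List.not_mem_nil, or_false, Prod.mk.injEq] at h
  rcases h with ⟨⟨rfl,rfl⟩,rfl,rfl⟩|⟨⟨rfl,rfl⟩,rfl,rfl⟩|⟨⟨rfl,rfl⟩,rfl,rfl⟩|⟨⟨rfl,rfl⟩,rfl,rfl⟩|⟨⟨rfl,rfl⟩,rfl,rfl⟩|⟨⟨rfl,rfl⟩,rfl,rfl⟩|⟨⟨rfl,rfl⟩,rfl,rfl⟩|⟨⟨rfl,rfl⟩,rfl,rfl⟩ <;>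
    first
      | (left; simp [wsA, wsB]; done)
      | (right; simp [wsA, wsB]; done)

lemma forward_D {t : ℕ} {p q : XIdx m n}
    (hout : ∀ s, s ≠ t → s ≠ t + 1 → diagOf q s = diagOf p s)
    (hAt : (∃ i, q.1.1 i = t) ↔ ∃ i, p.1.1 i = t)
    (hAt1 : (∃ i, q.1.1 i = t + 1) ↔ ∃ i, p.1.1 i = t + 1)
    (hBpt : ¬ ∃ j, p.2.1 j = t) (hBpt1 : ∃ j, p.2.1 j = t + 1)
    (hBqt : ∃ j, q.2.1 j = t) (hBqt1 : ¬ ∃ j, q.2.1 j = t + 1) :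
    ∃ h : PD t p, q = qD t p h := by
  have hPD : PD t p := ⟨hBpt1, fun j hj => hBpt ⟨j, hj⟩⟩
  refine ⟨hPD, ?_⟩
  have hA : ∀ s, (∃ i, q.1.1 i = s) ↔ ∃ i, p.1.1 i = s := by
    intro s
    rcases eq_or_ne s t with rfl | h1
    · exact hAt
    rcases eq_or_ne s (t + 1) with rfl | h2
    · exact hAt1
    · rw [← wsA_diag, ← wsA_diag, hout s h1 h2]
  have hB : ∀ s, (∃ j, q.2.1 j = s) ↔ (s = t ∨ ((∃ j, p.2.1 j = s) ∧ s ≠ t + 1)) := by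
    intro s
    rcases eq_or_ne s t with rfl | h1
    · simp [hBqt]
    rcases eq_or_ne s (t + 1) with rfl | h2
    · simp [hBqt1, h1]
    · have h3 : (∃ j, q.2.1 j = s) ↔ ∃ j, p.2.1 j = s := by
        rw [← wsB_diag, ← wsB_diag, hout s h1 h2]
      rw [h3]; simp [h1, h2]
  refine Prod.ext (Subtype.ext ?_) (Subtype.ext ?_)
  · refine (StrictAnti.range_inj q.1.2 (qD t p hPD).1.2).mp (Set.ext fun s => ?_)
    simp only [Set.mem_range]
    rw [hA s, ← range_qD_fst t p hPD s]
  · refine (StrictAnti.range_inj q.2.2 (qD t p hPD).2.2).mp (Set.ext fun s => ?_)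
    simp only [Set.mem_range]
    rw [hB s, ← range_qD_snd t p hPD s]

lemma forward_C {t : ℕ} {p q : XIdx m n}
    (hout : ∀ s, s ≠ t → s ≠ t + 1 → diagOf q s = diagOf p s)
    (hBt : (∃ j, q.2.1 j = t) ↔ ∃ j, p.2.1 j = t)
    (hBt1 : (∃ j, q.2.1 j = t + 1) ↔ ∃ j, p.2.1 j = t + 1)
    (hApt : ∃ i, p.1.1 i = t) (hApt1 : ¬ ∃ i, p.1.1 i = t + 1)
    (hAqt : ¬ ∃ i, q.1.1 i = t) (hAqt1 : ∃ i, q.1.1 i = t + 1) :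
    ∃ h : PC t p, q = qC t p h := by
  have hPC : PC t p := ⟨hApt, fun i hi => hApt1 ⟨i, hi⟩⟩
  refine ⟨hPC, ?_⟩
  have hB : ∀ s, (∃ j, q.2.1 j = s) ↔ ∃ j, p.2.1 j = s := by
    intro s
    rcases eq_or_ne s t with rfl | h1
    · exact hBt
    rcases eq_or_ne s (t + 1) with rfl | h2
    · exact hBt1
    · rw [← wsB_diag, ← wsB_diag, hout s h1 h2]
  have hA : ∀ s, (∃ i, q.1.1 i = s) ↔ (s = t + 1 ∨ ((∃ i, p.1.1 i = s) ∧ s ≠ t)) := by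
    intro s
    rcases eq_or_ne s t with rfl | h1
    · simp [hAqt]
    rcases eq_or_ne s (t + 1) with rfl | h2
    · simp [hAqt1]
    · have h3 : (∃ i, q.1.1 i = s) ↔ ∃ i, p.1.1 i = s := by
        rw [← wsA_diag, ← wsA_diag, hout s h1 h2]
      rw [h3]; simp [h1, h2]
  refine Prod.ext (Subtype.ext ?_) (Subtype.ext ?_)
  · refine (StrictAnti.range_inj q.1.2 (qC t p hPC).1.2).mp (Set.ext fun s => ?_)
    simp only [Set.mem_range]
    rw [hA s, ← range_qC_fst t p hPC s]
  · refine (StrictAnti.range_inj q.2.2 (qC t p hPC).2.2).mp (Set.ext fun s => ?_)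
    simp only [Set.mem_range]
    rw [hB s, ← range_qC_snd t p hPC s]

lemma backward_D {t : ℕ} {p : XIdx m n} (h : PD t p) :
    TableMove t (diagOf p) (diagOf (qD t p h)) := by
  have hBpt : ¬ ∃ j, p.2.1 j = t := fun ⟨j, hj⟩ => h.2 j hj
  constructor
  · intro s h1 h2
    apply diag_ext
    · rw [wsA_diag, wsA_diag, range_qD_fst]
    · rw [wsB_diag, wsB_diag, range_qD_snd]; simp [h1, h2]
  · have e1 := range_qD_fst t p h
    have e2 := range_qD_snd t p h
    simp only [movePatterns, List.mem_cons, List.not_mem_nil, or_false, Prod.mk.injEq]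
    by_cases hA1 : ∃ i, p.1.1 i = t <;> by_cases hA2 : ∃ i, p.1.1 i = t + 1 <;>
      simp [diagOf, e1, e2, hA1, hA2, hBpt, h.1]

lemma backward_C {t : ℕ} {p : XIdx m n} (h : PC t p) :
    TableMove t (diagOf p) (diagOf (qC t p h)) := by
  have hApt1 : ¬ ∃ i, p.1.1 i = t + 1 := fun ⟨i, hi⟩ => h.2 i hi
  constructor
  · intro s h1 h2
    apply diag_ext
    · rw [wsA_diag, wsA_diag, range_qC_fst]; simp [h1, h2]
    · rw [wsB_diag, wsB_diag, range_qC_snd]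
  · have e1 := range_qC_fst t p h
    have e2 := range_qC_snd t p h
    simp only [movePatterns, List.mem_cons, List.not_mem_nil, or_false, Prod.mk.injEq]
    by_cases hB1 : ∃ j, p.2.1 j = t <;> by_cases hB2 : ∃ j, p.2.1 j = t + 1 <;>
      simp [diagOf, e1, e2, hB1, hB2, hApt1, h.1]

lemma TM_iff {t : ℕ} {p q : XIdx m n} :
    TableMove t (diagOf p) (diagOf q) ↔
      (∃ h : PD t p, q = qD t p h) ∨ (∃ h : PC t p, q = qC t p h) := by
  constructor
  · rintro ⟨hout, hpat⟩
    rcases pattern_shape hpat with ⟨⟨h1, h2⟩, h3, h4, h5, h6⟩ | ⟨⟨h1, h2⟩, h3, h4, h5, h6⟩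
    · rw [wsA_diag, wsA_diag] at h1 h2
      rw [wsB_diag] at h3 h4 h5 h6
      exact Or.inl (forward_D hout h1 h2 h3 h4 h5 h6)
    · rw [wsB_diag, wsB_diag] at h1 h2
      rw [wsA_diag] at h3 h4 h5 h6
      exact Or.inr (forward_C hout h1 h2 h3 h4 h5 h6)
  · rintro (⟨h, rfl⟩ | ⟨h, rfl⟩)
    exacts [backward_D h, backward_C h]

lemma eraise_single (t : ℕ) (p : XIdx m n) :
    Eraise t (Finsupp.single p (1 : ℚ)) =
      (if h : PD t p then Finsupp.single (qD t p h) (1 : ℚ) else 0)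
      + (if h : PC t p then Finsupp.single (qC t p h) (1 : ℚ) else 0) := by
  have hL : Eraise t (Finsupp.single p (1 : ℚ)) =
      (∑ j : Fin n, if p.2.1 j = t + 1 then
        (if h : StrictAnti (Function.update p.2.1 j t)
          then Finsupp.single (p.1, ⟨Function.update p.2.1 j t, h⟩) (1 : ℚ) else 0) else 0)
      + (∑ i : Fin m, if p.1.1 i = t then
        (if h : StrictAnti (Function.update p.1.1 i (t + 1))
          then Finsupp.single (⟨Function.update p.1.1 i (t + 1), h⟩, p.2) (1 : ℚ) else 0)
        else 0) := by
    simp [Eraise, replD, replC, Finsupp.lift_apply, Finsupp.sum_single_index]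
  rw [hL]
  congr 1
  · by_cases h1 : ∃ j, p.2.1 j = t + 1
    · have hj1 := Classical.choose_spec h1
      set j1 := Classical.choose h1 with hj1def
      rw [Finset.sum_eq_single j1]
      · rw [if_pos hj1]
        by_cases h2 : ∀ j, p.2.1 j ≠ t
        · rw [dif_pos (show PD t p from ⟨h1, h2⟩),
            dif_pos (strictAnti_updateD p.2.2 hj1 h2)]
          rfl
        · push_neg at h2
          obtain ⟨j', hj'⟩ := h2
          rw [dif_neg (not_strictAnti_updateD hj1 hj'),
            dif_neg (fun hPD : PD t p => hPD.2 j' hj')]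
      · intro b _ hb
        rw [if_neg (fun hbv => hb (p.2.2.injective (hbv.trans hj1.symm)))]
      · intro hmem; exact absurd (Finset.mem_univ j1) hmem
    · rw [Finset.sum_eq_zero, dif_neg (fun hPD : PD t p => h1 hPD.1)]
      intro j _
      rw [if_neg (fun hj => h1 ⟨j, hj⟩)]
  · by_cases h1 : ∃ i, p.1.1 i = t
    · have hi1 := Classical.choose_spec h1
      set i1 := Classical.choose h1 with hi1def
      rw [Finset.sum_eq_single i1]
      · rw [if_pos hi1]
        by_cases h2 : ∀ i, p.1.1 i ≠ t + 1
        · rw [dif_pos (show PC t p from ⟨h1, h2⟩),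
            dif_pos (strictAnti_updateC p.1.2 hi1 h2)]
          rfl
        · push_neg at h2
          obtain ⟨i', hi'⟩ := h2
          rw [dif_neg (not_strictAnti_updateC hi1 hi'),
            dif_neg (fun hPC : PC t p => hPC.2 i' hi')]
      · intro b _ hb
        rw [if_neg (fun hbv => hb (p.1.2.injective (hbv.trans hi1.symm)))]
      · intro hmem; exact absurd (Finset.mem_univ i1) hmem
    · rw [Finset.sum_eq_zero, dif_neg (fun hPC : PC t p => h1 hPC.1)]
      intro i _
      rw [if_neg (fun hi => h1 ⟨i, hi⟩)]

end Stmt7Aux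

open Stmt7Aux

/-- **Lemma 4 (combinatorial form).**  The Chevalley generator `E_{a,a+1}` of
`gl_{∞/2}` (with `a = t + 1/2`) acts on a basis vector `x_λ` of `Λ^m(V*) ⊗ Λ^n(V)` by
`E_{a,a+1} x_λ = Σ_μ x_μ`, where `μ` ranges over the diagrams obtained from the
weight diagram of `λ` by the local moves of figure 1, all with coefficient `+1`. -/
theorem stmt7 {m n : ℕ} (t : ℕ) (p : XIdx m n) :
    Eraise t (Finsupp.single p (1 : ℚ)) =
      ∑ᶠ (q : XIdx m n) (_ : TableMove t (diagOf p) (diagOf q)),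
        Finsupp.single q (1 : ℚ) := by
  rw [eraise_single]
  have hcong : ∀ q : XIdx m n,
      (∑ᶠ _ : TableMove t (diagOf p) (diagOf q), Finsupp.single q (1 : ℚ)) =
      if (∃ h : PD t p, q = qD t p h) ∨ (∃ h : PC t p, q = qC t p h)
        then Finsupp.single q (1 : ℚ) else 0 := by
    intro q
    rw [finsum_eq_if]
    exact if_congr TM_iff rfl rfl
  rw [finsum_congr hcong]
  by_cases hPD : PD t p <;> by_cases hPC : PC t p
  · -- both moves
    have hne : qD t p hPD ≠ qC t p hPC := by
      intro e
      have h1 : (qD t p hPD).1.1 (Classical.choose hPC.1) = t := Classical.choose_spec hPC.1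
      have h2 : (qC t p hPC).1.1 (Classical.choose hPC.1) = t + 1 :=
        Function.update_self _ _ _
      rw [e, h2] at h1; omega
    have hsupp : (Function.support fun q : XIdx m n =>
        if (∃ h : PD t p, q = qD t p h) ∨ (∃ h : PC t p, q = qC t p h)
          then Finsupp.single q (1 : ℚ) else 0) ⊆
        ↑({qD t p hPD, qC t p hPC} : Finset (XIdx m n)) := by
      intro q hq
      by_contra hmem
      simp only [Finset.coe_insert, Finset.coe_singleton, Set.mem_insert_iff,
        Set.mem_singleton_iff, not_or] at hmem
      exact hq (if_neg (by
        rintro (⟨h, rfl⟩ | ⟨h, rfl⟩)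
        · exact hmem.1 rfl
        · exact hmem.2 rfl))
    rw [finsum_eq_finset_sum_of_support_subset _ hsupp, Finset.sum_pair hne,
      dif_pos hPD, dif_pos hPC, if_pos (Or.inl ⟨hPD, rfl⟩), if_pos (Or.inr ⟨hPC, rfl⟩)]
  · rw [finsum_eq_single _ (qD t p hPD), if_pos (Or.inl ⟨hPD, rfl⟩), dif_pos hPD,
      dif_neg hPC, add_zero]
    intro x hx
    rw [if_neg]
    rintro (⟨h, rfl⟩ | ⟨h, rfl⟩)
    · exact hx rfl
    · exact hPC h
  · rw [finsum_eq_single _ (qC t p hPC), if_pos (Or.inr ⟨hPC, rfl⟩), dif_pos hPC,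
      dif_neg hPD, zero_add]
    intro x hx
    rw [if_neg]
    rintro (⟨h, rfl⟩ | ⟨h, rfl⟩)
    · exact hPD h
    · exact hx rfl
  · rw [dif_neg hPD, dif_neg hPC, add_zero]
    rw [finsum_eq_zero_of_forall_eq_zero]
    intro x
    rw [if_neg]
    rintro (⟨h, _⟩ | ⟨h, _⟩)
    · exact hPD h
    · exact hPC h
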